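/- Let G be a finite connected simple graph with positive real edge weights. If a cutset D of G is not a minimum-weight u,v-cut for any pair of distinct vertices u and v, then D is not relevant, i.e., D belongs to no minimum cut basis of G. -/

import Mathlib

open Finset
open scoped Classical

variable {V : Type*}

/-- The edge boundary `∂S`: the set of edges of `G` with exactly one endpoint in `S`. -/
noncomputable def edgeBoundary [Fintype V] [DecidableEq V] (G : SimpleGraph V) (S : Finset V) :
    Finset (Sym2 V) :=
  Finset.univ.filter fun e => e ∈ G.edgeSet ∧ ∃ u v, e = s(u, v) ∧ u ∈ S ∧ v ∉ S

/-- A cutset of `G` is an edge boundary `∂S` with `∅ ≠ S ≠ V`. -/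
def IsCutset [Fintype V] [DecidableEq V] (G : SimpleGraph V) (D : Finset (Sym2 V)) : Prop :=
  ∃ S : Finset V, S ≠ ∅ ∧ S ≠ Finset.univ ∧ D = edgeBoundary G S

/-- Symmetric difference of a finite family of edge sets: the set of edges occurring in an
odd number of members of the family. -/
noncomputable def symmDiffFamily [Fintype V] [DecidableEq V] {ι : Type*} (s : Finset ι)
    (f : ι → Finset (Sym2 V)) : Finset (Sym2 V) :=
  Finset.univ.filter fun e => Odd ((s.filter fun i => e ∈ f i).card)

/-- A cut basis: a family of `n - 1` cutsets such that every element of the cut space is the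
symmetric difference of a subfamily, and no nonempty subfamily has empty symmetric
difference. -/
def IsCutBasis [Fintype V] [DecidableEq V] (G : SimpleGraph V)
    (𝒟 : Finset (Finset (Sym2 V))) : Prop :=
  𝒟.card = Fintype.card V - 1 ∧
  (∀ D ∈ 𝒟, IsCutset G D) ∧
  (∀ S : Finset V, ∃ ℬ ⊆ 𝒟, edgeBoundary G S = symmDiffFamily ℬ id) ∧
  (∀ ℬ ⊆ 𝒟, ℬ.Nonempty → symmDiffFamily ℬ id ≠ ∅)

/-- The weight `|D|` of an edge set `D`. -/
def weight (w : Sym2 V → ℝ) (D : Finset (Sym2 V)) : ℝ :=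
  ∑ e ∈ D, w e

/-- A minimum cut basis: a cut basis of minimum total weight. -/
def IsMinCutBasis [Fintype V] [DecidableEq V] (G : SimpleGraph V) (w : Sym2 V → ℝ)
    (𝒟 : Finset (Finset (Sym2 V))) : Prop :=
  IsCutBasis G 𝒟 ∧
  ∀ 𝒟' : Finset (Finset (Sym2 V)), IsCutBasis G 𝒟' →
    ∑ D ∈ 𝒟, weight w D ≤ ∑ D ∈ 𝒟', weight w D

/-- A cutset is relevant if it belongs to at least one minimum cut basis. -/
def IsRelevant [Fintype V] [DecidableEq V] (G : SimpleGraph V) (w : Sym2 V → ℝ)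
    (D : Finset (Sym2 V)) : Prop :=
  ∃ 𝒟 : Finset (Finset (Sym2 V)), IsMinCutBasis G w 𝒟 ∧ D ∈ 𝒟

/-- A `u,v`-cut: a cutset of the form `∂S` with `u ∈ S` and `v ∉ S`. -/
def IsUVCut [Fintype V] [DecidableEq V] (G : SimpleGraph V) (u v : V)
    (D : Finset (Sym2 V)) : Prop :=
  ∃ S : Finset V, u ∈ S ∧ v ∉ S ∧ D = edgeBoundary G S

/-- A minimum-weight `u,v`-cut. -/
def IsMinUVCut [Fintype V] [DecidableEq V] (G : SimpleGraph V) (w : Sym2 V → ℝ) (u v : V)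
    (D : Finset (Sym2 V)) : Prop :=
  IsUVCut G u v D ∧ ∀ D' : Finset (Sym2 V), IsUVCut G u v D' → weight w D ≤ weight w D'

/-- A minimum `u,v`-cut with respect to unit weights (cardinality). -/
def IsMinUVCutCard [Fintype V] [DecidableEq V] (G : SimpleGraph V) (u v : V)
    (D : Finset (Sym2 V)) : Prop :=
  IsUVCut G u v D ∧ ∀ D' : Finset (Sym2 V), IsUVCut G u v D' → D.card ≤ D'.card


section Aux

variable [Fintype V] [DecidableEq V] (G : SimpleGraph V)

lemma mem_edgeBoundary_iff {S : Finset V} {a b : V} (hab : G.Adj a b) :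
    s(a, b) ∈ edgeBoundary G S ↔ ((a ∈ S) ↔ (b ∉ S)) := by
  classical
  unfold edgeBoundary
  simp only [Finset.mem_filter, Finset.mem_univ, true_and, SimpleGraph.mem_edgeSet]
  constructor
  · rintro ⟨-, u, v, huv, hu, hv⟩
    rw [Sym2.eq_iff] at huv
    rcases huv with ⟨rfl, rfl⟩ | ⟨rfl, rfl⟩ <;> tauto
  · intro hiff
    refine ⟨hab, ?_⟩
    by_cases ha : a ∈ S
    · exact ⟨a, b, rfl, ha, (hiff.mp ha)⟩
    · refine ⟨b, a, Sym2.eq_swap ▸ rfl, ?_, ha⟩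
      by_contra hb
      exact ha (hiff.mpr hb)

lemma edgeBoundary_subset_edges {S : Finset V} {e : Sym2 V} (he : e ∈ edgeBoundary G S) :
    e ∈ G.edgeSet := by
  unfold edgeBoundary at he
  simp only [Finset.mem_filter] at he
  exact he.2.1

lemma edgeBoundary_compl (S : Finset V) : edgeBoundary G Sᶜ = edgeBoundary G S := by
  classical
  apply Finset.ext
  intro e
  induction e using Sym2.inductionOn with
  | hf a b =>
    by_cases hab : G.Adj a b
    · rw [mem_edgeBoundary_iff G hab, mem_edgeBoundary_iff G hab]
      simp only [Finset.mem_compl]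
      tauto
    · constructor <;> intro hmem <;>
        exact absurd ((SimpleGraph.mem_edgeSet G).mp (edgeBoundary_subset_edges G hmem)) hab

lemma exists_rep_of_mem_edgeBoundary {S : Finset V} {e : Sym2 V}
    (he : e ∈ edgeBoundary G S) : ∃ a b, e = s(a, b) ∧ G.Adj a b := by
  induction e using Sym2.inductionOn with
  | hf a b => exact ⟨a, b, rfl, (SimpleGraph.mem_edgeSet G).mp (edgeBoundary_subset_edges G he)⟩

end Aux

section Aux2

variable [Fintype V] [DecidableEq V] (G : SimpleGraph V)

/-- The finset of edges of `G`. -/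
noncomputable def edgesF (G : SimpleGraph V) : Finset (Sym2 V) :=
  Finset.univ.filter (· ∈ G.edgeSet)

lemma edgeBoundary_subset_edgesF (S : Finset V) : edgeBoundary G S ⊆ edgesF G := by
  intro e he
  simp only [edgesF, Finset.mem_filter, Finset.mem_univ, true_and]
  exact edgeBoundary_subset_edges G he

lemma weight_eb_eq (w : Sym2 V → ℝ) (S : Finset V) :
    weight w (edgeBoundary G S) = ∑ e ∈ edgesF G, if e ∈ edgeBoundary G S then w e else 0 := by
  classical
  rw [← Finset.sum_filter]
  unfold weight
  congr 1
  apply Finset.ext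
  intro e
  simp only [Finset.mem_filter]
  exact ⟨fun h => ⟨edgeBoundary_subset_edgesF G S h, h⟩, fun h => h.2⟩

lemma cut_submod (w : Sym2 V → ℝ) (hw : ∀ e ∈ G.edgeSet, 0 ≤ w e) (A B : Finset V) :
    weight w (edgeBoundary G (A ∩ B)) + weight w (edgeBoundary G (A ∪ B)) ≤
      weight w (edgeBoundary G A) + weight w (edgeBoundary G B) := by
  classical
  rw [weight_eb_eq, weight_eb_eq, weight_eb_eq, weight_eb_eq, ← Finset.sum_add_distrib,
    ← Finset.sum_add_distrib]
  apply Finset.sum_le_sum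
  intro e he
  simp only [edgesF, Finset.mem_filter, Finset.mem_univ, true_and] at he
  induction e using Sym2.inductionOn with
  | hf a b =>
    have hab : G.Adj a b := (SimpleGraph.mem_edgeSet G).mp he
    have hwe : 0 ≤ w s(a, b) := hw _ he
    simp only [mem_edgeBoundary_iff G hab, Finset.mem_inter, Finset.mem_union]
    by_cases haA : a ∈ A <;> by_cases haB : a ∈ B <;> by_cases hbA : b ∈ A <;>
      by_cases hbB : b ∈ B <;> simp_all <;> linarith

lemma side_eq_of_edgeBoundary_eq (hG : G.Connected) {S T : Finset V}
    (h : edgeBoundary G S = edgeBoundary G T) : S = T ∨ S = Tᶜ := by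
  classical
  have key : ∀ a b : V, G.Adj a b → ((a ∈ S ↔ a ∈ T) ↔ (b ∈ S ↔ b ∈ T)) := by
    intro a b hab
    have h1 : (s(a, b) ∈ edgeBoundary G S) ↔ (s(a, b) ∈ edgeBoundary G T) := by rw [h]
    rw [mem_edgeBoundary_iff G hab, mem_edgeBoundary_iff G hab] at h1
    tauto
  have walkkey : ∀ a b : V, G.Walk a b → ((a ∈ S ↔ a ∈ T) ↔ (b ∈ S ↔ b ∈ T)) := by
    intro a b p
    induction p with
    | nil => exact Iff.rfl
    | cons hadj _ ih => exact (key _ _ hadj).trans ih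
  have reach : ∀ a b : V, ((a ∈ S ↔ a ∈ T) ↔ (b ∈ S ↔ b ∈ T)) := by
    intro a b
    obtain ⟨p⟩ := hG.preconnected a b
    exact walkkey a b p
  by_cases hall : ∀ v : V, (v ∈ S ↔ v ∈ T)
  · left; apply Finset.ext; intro v; exact hall v
  · right
    push_neg at hall
    obtain ⟨v₀, hv₀⟩ := hall
    apply Finset.ext
    intro v
    simp only [Finset.mem_compl]
    have := reach v v₀
    by_cases hvS : v ∈ S <;> by_cases hvT : v ∈ T <;> tauto

end Aux2

section Zmod2

variable [Fintype V] [DecidableEq V] (G : SimpleGraph V)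

lemma zmod2_cases (a : ZMod 2) : a = 0 ∨ a = 1 := by revert a; decide

lemma zmod2_natCast_eq_one_iff (n : ℕ) : ((n : ZMod 2) = 1) ↔ Odd n := by
  rw [Nat.odd_iff, ← ZMod.natCast_mod n 2]
  rcases Nat.mod_two_eq_zero_or_one n with h | h <;> rw [h] <;> simp

/-- Indicator vector of an edge set, over `ZMod 2`. -/
noncomputable def ind (D : Finset (Sym2 V)) : Sym2 V → ZMod 2 :=
  fun e => if e ∈ D then 1 else 0

lemma ind_injective : Function.Injective (ind (V := V)) := by
  intro A B h
  apply Finset.ext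
  intro e
  have := congrFun h e
  unfold ind at this
  by_cases hA : e ∈ A <;> by_cases hB : e ∈ B <;> simp_all

lemma ind_eq_zero_iff (A : Finset (Sym2 V)) : ind A = 0 ↔ A = ∅ := by
  constructor
  · intro h
    have : ind A = ind ∅ := by
      rw [h]; funext e; simp [ind]
    exact ind_injective this
  · rintro rfl; funext e; simp [ind]

lemma ind_sum_apply (ℬ : Finset (Finset (Sym2 V))) (e : Sym2 V) :
    (∑ B ∈ ℬ, ind B) e = (((ℬ.filter (fun B => e ∈ B)).card : ℕ) : ZMod 2) := by
  rw [Finset.sum_apply]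
  unfold ind
  rw [Finset.sum_boole]

lemma ind_symmDiffFamily (ℬ : Finset (Finset (Sym2 V))) :
    ind (symmDiffFamily ℬ id) = ∑ B ∈ ℬ, ind B := by
  funext e
  rw [ind_sum_apply]
  unfold ind symmDiffFamily
  simp only [Finset.mem_filter, Finset.mem_univ, true_and, id]
  by_cases ho : Odd ((ℬ.filter (fun B => e ∈ B)).card)
  · rw [if_pos ho, Eq.comm, zmod2_natCast_eq_one_iff]
    exact ho
  · rw [if_neg ho]
    rw [Nat.not_odd_iff_even] at ho
    rw [Eq.comm, ZMod.natCast_eq_zero_iff]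
    exact ho.two_dvd

/-- Separation indicator over `ZMod 2`. -/
noncomputable def sepz (S : Finset V) (u v : V) : ZMod 2 :=
  (if u ∈ S then 1 else 0) + (if v ∈ S then 1 else 0)

lemma sepz_comm (S : Finset V) (u v : V) : sepz S u v = sepz S v u := by
  unfold sepz; ring

lemma sepz_self (S : Finset V) (u : V) : sepz S u u = 0 := by
  unfold sepz; by_cases h : u ∈ S <;> simp [h] <;> decide

lemma ind_edgeBoundary_adj {S : Finset V} {a b : V} (hab : G.Adj a b) :
    ind (edgeBoundary G S) s(a, b) = sepz S a b := by
  unfold ind sepz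
  by_cases hmem : s(a, b) ∈ edgeBoundary G S
  · rw [if_pos hmem]
    rw [mem_edgeBoundary_iff G hab] at hmem
    by_cases ha : a ∈ S <;> by_cases hb : b ∈ S <;> simp_all <;> decide
  · rw [if_neg hmem]
    rw [mem_edgeBoundary_iff G hab] at hmem
    by_cases ha : a ∈ S <;> by_cases hb : b ∈ S <;> simp_all <;> decide

lemma ind_edgeBoundary_nonedge {S : Finset V} {e : Sym2 V} (he : e ∉ G.edgeSet) :
    ind (edgeBoundary G S) e = 0 := by
  unfold ind
  rw [if_neg]
  intro hmem
  exact he (edgeBoundary_subset_edges G hmem)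

lemma list_sum_apply {α M : Type*} [AddCommMonoid M] (l : List (α → M)) (x : α) :
    l.sum x = (l.map (fun f => f x)).sum := by
  induction l with
  | nil => rfl
  | cons f t ih => simp [List.sum_cons, ih]

end Zmod2

section Perturb

lemma sum_range_pow3_lt (n : ℕ) : (∑ i ∈ Finset.range n, 3 ^ i) < 3 ^ n := by
  induction n with
  | zero => simp
  | succ m ih =>
    rw [Finset.sum_range_succ, pow_succ]
    omega

lemma sum_pow3_lt (n : ℕ) (A : Finset ℕ) (hA : A ⊆ Finset.range n) :
    ∑ i ∈ A, 3 ^ i < 3 ^ n := by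
  calc ∑ i ∈ A, 3 ^ i ≤ ∑ i ∈ Finset.range n, 3 ^ i :=
        Finset.sum_le_sum_of_subset hA
    _ < 3 ^ n := sum_range_pow3_lt n

lemma pow3_sum_inj : ∀ (n : ℕ) (A B : Finset ℕ), A ⊆ Finset.range n → B ⊆ Finset.range n →
    (∑ i ∈ A, 3 ^ i) = (∑ i ∈ B, 3 ^ i) → A = B := by
  intro n
  induction n with
  | zero =>
    intro A B hA hB _
    simp only [Finset.range_zero, Finset.subset_empty] at hA hB
    rw [hA, hB]
  | succ m ih =>
    intro A B hA hB hsum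
    have key : ∀ C : Finset ℕ, C ⊆ Finset.range (m + 1) →
        (∑ i ∈ C, 3 ^ i) = (∑ i ∈ C.erase m, 3 ^ i) + (if m ∈ C then 3 ^ m else 0) := by
      intro C _
      by_cases hm : m ∈ C
      · rw [if_pos hm, ← Finset.sum_erase_add C _ hm]
      · rw [if_neg hm, Finset.erase_eq_of_notMem hm, add_zero]
    have hAe : A.erase m ⊆ Finset.range m := by
      intro i hi
      have h1 := Finset.mem_of_mem_erase hi
      have h2 := Finset.ne_of_mem_erase hi
      have := hA h1
      simp only [Finset.mem_range] at this ⊢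
      omega
    have hBe : B.erase m ⊆ Finset.range m := by
      intro i hi
      have h1 := Finset.mem_of_mem_erase hi
      have h2 := Finset.ne_of_mem_erase hi
      have := hB h1
      simp only [Finset.mem_range] at this ⊢
      omega
    have hltA := sum_pow3_lt m (A.erase m) hAe
    have hltB := sum_pow3_lt m (B.erase m) hBe
    rw [key A hA, key B hB] at hsum
    by_cases hmA : m ∈ A <;> by_cases hmB : m ∈ B
    · rw [if_pos hmA, if_pos hmB] at hsum
      have : (∑ i ∈ A.erase m, 3 ^ i) = (∑ i ∈ B.erase m, 3 ^ i) := by omega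
      have heq := ih (A.erase m) (B.erase m) hAe hBe this
      apply Finset.ext
      intro i
      by_cases hi : i = m
      · subst hi; simp [hmA, hmB]
      · constructor <;> intro hmem
        · exact Finset.mem_of_mem_erase (heq ▸ Finset.mem_erase_of_ne_of_mem hi hmem)
        · exact Finset.mem_of_mem_erase (heq ▸ Finset.mem_erase_of_ne_of_mem hi hmem)
    · rw [if_pos hmA, if_neg hmB] at hsum; omega
    · rw [if_neg hmA, if_pos hmB] at hsum; omega
    · rw [if_neg hmA, if_neg hmB] at hsum
      have heq := ih (A.erase m) (B.erase m) hAe hBe (by omega)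
      rw [Finset.erase_eq_of_notMem hmA, Finset.erase_eq_of_notMem hmB] at heq
      exact heq

variable [Fintype V] [DecidableEq V]

/-- An injective "power of three" labelling of potential edges. -/
noncomputable def rnat : Sym2 V → ℕ :=
  fun e => 3 ^ ((Fintype.equivFin (Sym2 V)) e : ℕ)

lemma rnat_pos (e : Sym2 V) : 1 ≤ rnat e := Nat.one_le_pow _ _ (by norm_num)

lemma rsum_injective : Function.Injective (fun A : Finset (Sym2 V) => ∑ e ∈ A, rnat e) := by
  intro A B h
  simp only at h
  unfold rnat at h
  set f : Sym2 V → ℕ := fun e => ((Fintype.equivFin (Sym2 V)) e : ℕ) with hf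
  have hfinj : Function.Injective f := by
    intro a b hab
    exact (Fintype.equivFin (Sym2 V)).injective (Fin.ext hab)
  have himg : ∀ C : Finset (Sym2 V), (∑ e ∈ C, 3 ^ (f e)) = ∑ i ∈ C.image f, 3 ^ i := by
    intro C
    rw [Finset.sum_image (fun a _ b _ hab => hfinj hab)]
  rw [himg A, himg B] at h
  have hN : ∀ C : Finset (Sym2 V), C.image f ⊆ Finset.range (Fintype.card (Sym2 V)) := by
    intro C i hi
    simp only [Finset.mem_image] at hi
    obtain ⟨e, _, rfl⟩ := hi
    simp only [Finset.mem_range, hf]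
    exact ((Fintype.equivFin (Sym2 V)) e).isLt
  have := pow3_sum_inj _ _ _ (hN A) (hN B) h
  apply Finset.ext
  intro e
  constructor <;> intro hmem
  · have : f e ∈ B.image f := this ▸ Finset.mem_image_of_mem f hmem
    simp only [Finset.mem_image] at this
    obtain ⟨e', he', hfe⟩ := this
    rwa [← hfinj hfe]
  · have : f e ∈ A.image f := this ▸ Finset.mem_image_of_mem f hmem
    simp only [Finset.mem_image] at this
    obtain ⟨e', he', hfe⟩ := this
    rwa [← hfinj hfe]

lemma exists_good_perturbation (w : Sym2 V → ℝ) :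
    ∃ w' : Sym2 V → ℝ,
      (∀ e, w e < w' e) ∧
      (∀ A B : Finset (Sym2 V), weight w A < weight w B → weight w' A < weight w' B) ∧
      (∀ A B : Finset (Sym2 V), A ≠ B → weight w' A ≠ weight w' B) := by
  classical
  set rr : Finset (Sym2 V) → ℝ := fun A => ((∑ e ∈ A, rnat e : ℕ) : ℝ) with hrr
  have hrrinj : ∀ A B : Finset (Sym2 V), A ≠ B → rr A ≠ rr B := by
    intro A B hne heq
    exact hne (rsum_injective (Nat.cast_injective heq))
  -- candidate thresholds
  set P : Finset (Finset (Sym2 V) × Finset (Sym2 V)) :=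
    Finset.univ.filter (fun p => weight w p.1 < weight w p.2 ∧ rr p.2 < rr p.1) with hP
  set Thr : Finset ℝ := insert 1 (P.image (fun p => (weight w p.2 - weight w p.1) / (rr p.1 - rr p.2))) with hThr
  have hThrne : Thr.Nonempty := ⟨1, Finset.mem_insert_self 1 _⟩
  set δ : ℝ := Thr.min' hThrne with hδ
  have hδpos : 0 < δ := by
    apply Finset.lt_min'_iff Thr hThrne |>.mpr
    intro y hy
    rw [hThr] at hy
    rcases Finset.mem_insert.mp hy with rfl | hy
    · norm_num
    · simp only [Finset.mem_image] at hy
      obtain ⟨p, hp, rfl⟩ := hy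
      rw [hP] at hp
      simp only [Finset.mem_filter] at hp
      exact div_pos (by linarith [hp.2.1]) (by linarith [hp.2.2])
  -- bad set of epsilons
  set Bad : Finset ℝ :=
    Finset.univ.image (fun p : Finset (Sym2 V) × Finset (Sym2 V) =>
      (weight w p.2 - weight w p.1) / (rr p.1 - rr p.2)) with hBad
  have : ((Set.Ioo (0:ℝ) δ) \ (Bad : Set ℝ)).Nonempty := by
    apply Set.Infinite.nonempty
    apply Set.Infinite.diff
    · exact Set.Ioo_infinite hδpos
    · exact Bad.finite_toSet
  obtain ⟨ε, hεIoo, hεBad⟩ := this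
  obtain ⟨hε0, hεδ⟩ := hεIoo
  have hwgen : ∀ C : Finset (Sym2 V),
      weight (fun e => w e + ε * (rnat e : ℝ)) C = weight w C + ε * rr C := by
    intro C
    unfold weight
    rw [hrr]
    push_cast
    rw [Finset.mul_sum, ← Finset.sum_add_distrib]
  refine ⟨fun e => w e + ε * (rnat e : ℝ), ?_, ?_, ?_⟩
  · intro e
    have h1 : (1:ℝ) ≤ (rnat e : ℝ) := by exact_mod_cast rnat_pos e
    show w e < w e + ε * (rnat e : ℝ)
    nlinarith
  · intro A B hlt
    rw [hwgen A, hwgen B]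
    by_cases hr : rr A ≤ rr B
    · have := mul_le_mul_of_nonneg_left hr (le_of_lt hε0)
      linarith
    · push_neg at hr
      have hmem : (A, B) ∈ P := by
        rw [hP]
        simp only [Finset.mem_filter, Finset.mem_univ, true_and]
        exact ⟨hlt, hr⟩
      have hthr : (weight w B - weight w A) / (rr A - rr B) ∈ Thr := by
        rw [hThr]
        exact Finset.mem_insert_of_mem (Finset.mem_image_of_mem _ hmem)
      have hεt : ε < (weight w B - weight w A) / (rr A - rr B) :=
        lt_of_lt_of_le hεδ (Finset.min'_le Thr _ hthr)
      have hpos : (0:ℝ) < rr A - rr B := by linarith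
      have := (lt_div_iff₀ hpos).mp hεt
      linarith
  · intro A B hne heq
    rw [hwgen A, hwgen B] at heq
    have hrne : rr A ≠ rr B := hrrinj A B hne
    have hεeq : ε = (weight w B - weight w A) / (rr A - rr B) := by
      have hsub : rr A - rr B ≠ 0 := fun hc => hrne (by linarith)
      field_simp
      linarith
    apply hεBad
    rw [hεeq, hBad]
    simp only [Finset.coe_image, Set.mem_image, Finset.mem_coe]
    exact ⟨(A, B), by simp, rfl⟩

end Perturb

section GH

variable [Fintype V] [DecidableEq V] (G : SimpleGraph V) (w' : Sym2 V → ℝ)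

/-- `W` is a minimum-weight `x,y`-side. -/
def MinSide (x y : V) (W : Finset V) : Prop :=
  x ∈ W ∧ y ∉ W ∧ ∀ T : Finset V, x ∈ T → y ∉ T →
    weight w' (edgeBoundary G W) ≤ weight w' (edgeBoundary G T)

/-- Minimum `x,y`-cut value. -/
noncomputable def lamval (x y : V) : ℝ :=
  sInf ((fun T : Finset V => weight w' (edgeBoundary G T)) '' {T | x ∈ T ∧ y ∉ T})

lemma weight_eb_compl (S : Finset V) :
    weight w' (edgeBoundary G Sᶜ) = weight w' (edgeBoundary G S) := by
  rw [edgeBoundary_compl]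

lemma lamval_le {x y : V} (T : Finset V) (hx : x ∈ T) (hy : y ∉ T) :
    lamval G w' x y ≤ weight w' (edgeBoundary G T) := by
  apply csInf_le
  · exact Set.Finite.bddBelow (Set.Finite.image _ (Set.toFinite _))
  · exact ⟨T, ⟨hx, hy⟩, rfl⟩

lemma exists_minside {x y : V} (hxy : x ≠ y) :
    ∃ W, MinSide G w' x y W ∧ weight w' (edgeBoundary G W) = lamval G w' x y := by
  have hne : ((fun T : Finset V => weight w' (edgeBoundary G T)) '' {T | x ∈ T ∧ y ∉ T}).Nonempty := by
    refine ⟨weight w' (edgeBoundary G {x}), {x}, ⟨Finset.mem_singleton_self x, ?_⟩, rfl⟩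
    simp only [Finset.mem_singleton]
    exact fun hc => hxy hc.symm
  have hfin : ((fun T : Finset V => weight w' (edgeBoundary G T)) '' {T | x ∈ T ∧ y ∉ T}).Finite :=
    Set.Finite.image _ (Set.toFinite _)
  have hmem := hne.csInf_mem hfin
  obtain ⟨W, ⟨hx, hy⟩, hval⟩ := hmem
  simp only at hval
  refine ⟨W, ⟨hx, hy, ?_⟩, hval⟩
  intro T hxT hyT
  rw [show weight w' (edgeBoundary G W) = lamval G w' x y from hval]
  exact lamval_le G w' T hxT hyT

lemma minside_lamval {x y : V} {W : Finset V} (hms : MinSide G w' x y W) :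
    weight w' (edgeBoundary G W) = lamval G w' x y := by
  obtain ⟨hx, hy, hmin⟩ := hms
  have hxy : x ≠ y := fun hc => hy (hc ▸ hx)
  obtain ⟨W₀, hms₀, hval₀⟩ := exists_minside G w' hxy
  apply le_antisymm
  · rw [← hval₀]
    exact hmin W₀ hms₀.1 hms₀.2.1
  · exact lamval_le G w' W hx hy

lemma minside_compl {x y : V} {W : Finset V} (hms : MinSide G w' x y W) :
    MinSide G w' y x Wᶜ := by
  obtain ⟨hx, hy, hmin⟩ := hms
  refine ⟨Finset.mem_compl.mpr hy, fun hc => (Finset.mem_compl.mp hc) hx, ?_⟩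
  intro T hyT hxT
  rw [weight_eb_compl]
  have := hmin Tᶜ (Finset.mem_compl.mpr hxT) (fun hc => (Finset.mem_compl.mp hc) hyT)
  rwa [weight_eb_compl] at this

/-- If a minimum `x,y`-side `X` (with `x, y ∈ W`) has weight at most that of the minimum
`r,s`-side `W`, then `X` does not separate `r` from `s`. -/
lemma comember (hG : G.Connected)
    (hw'inj : ∀ A B : Finset (Sym2 V), A ≠ B → weight w' A ≠ weight w' B)
    {r s x y : V} {W X : Finset V}
    (hW : MinSide G w' r s W) (hX : MinSide G w' x y X)
    (hxW : x ∈ W) (hyW : y ∈ W)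
    (hle : weight w' (edgeBoundary G X) ≤ weight w' (edgeBoundary G W)) :
    (r ∈ X ↔ s ∈ X) := by
  by_contra hco
  have hkey : edgeBoundary G X = edgeBoundary G W := by
    by_contra hne
    apply hw'inj _ _ hne
    apply le_antisymm hle
    by_cases hrX : r ∈ X
    · have hsX : s ∉ X := fun hc => hco ⟨fun _ => hc, fun _ => hrX⟩
      exact hW.2.2 X hrX hsX
    · have hsX : s ∈ X := by
        by_contra hc
        exact hco ⟨fun h => absurd h hrX, fun h => absurd h hc⟩
      have := hW.2.2 Xᶜ (Finset.mem_compl.mpr hrX) (fun hc => (Finset.mem_compl.mp hc) hsX)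
      rwa [weight_eb_compl] at this
  rcases side_eq_of_edgeBoundary_eq G hG hkey with heq | heq
  · exact hX.2.1 (heq ▸ hyW)
  · have : x ∈ Wᶜ := heq ▸ hX.1
    exact (Finset.mem_compl.mp this) hxW

/-- Uncrossing: transform a minimum `x,y`-side to one nested with `W`. -/
lemma z_minside (hw'pos : ∀ e ∈ G.edgeSet, 0 ≤ w' e)
    {r s x y : V} {W X : Finset V}
    (hW : MinSide G w' r s W) (hX : MinSide G w' x y X)
    (hxW : x ∈ W) (hyW : y ∈ W) (hco : r ∈ X ↔ s ∈ X) :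
    MinSide G w' x y (if r ∈ X then X ∪ Wᶜ else X ∩ W) := by
  by_cases hrX : r ∈ X
  · have hsX : s ∈ X := hco.mp hrX
    rw [if_pos hrX]
    refine ⟨Finset.mem_union_left _ hX.1, ?_, ?_⟩
    · intro hc
      rcases Finset.mem_union.mp hc with h | h
      · exact hX.2.1 h
      · exact (Finset.mem_compl.mp h) hyW
    · intro T hxT hyT
      have hsub := cut_submod G w' hw'pos X Wᶜ
      have hlow : weight w' (edgeBoundary G W) ≤ weight w' (edgeBoundary G (X ∩ Wᶜ)) := by
        have h1 : r ∈ (X ∩ Wᶜ)ᶜ := by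
          simp only [Finset.mem_compl, Finset.mem_inter, Finset.mem_compl, not_and, not_not]
          intro _; exact hW.1
        have h2 : s ∉ (X ∩ Wᶜ)ᶜ := by
          simp only [Finset.mem_compl, Finset.mem_inter, Finset.mem_compl, not_and, not_not]
          push_neg
          exact ⟨hsX, hW.2.1⟩
        have := hW.2.2 _ h1 h2
        rwa [weight_eb_compl] at this
      rw [weight_eb_compl G w' W] at hsub
      have : weight w' (edgeBoundary G (X ∪ Wᶜ)) ≤ weight w' (edgeBoundary G X) := by linarith
      exact le_trans this (hX.2.2 T hxT hyT)
  · have hsX : s ∉ X := fun hc => hrX (hco.mpr hc)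
    rw [if_neg hrX]
    refine ⟨Finset.mem_inter.mpr ⟨hX.1, hxW⟩, ?_, ?_⟩
    · intro hc
      exact hX.2.1 (Finset.mem_inter.mp hc).1
    · intro T hxT hyT
      have hsub := cut_submod G w' hw'pos X W
      have hlow : weight w' (edgeBoundary G W) ≤ weight w' (edgeBoundary G (X ∪ W)) := by
        apply hW.2.2
        · exact Finset.mem_union_right _ hW.1
        · intro hc
          rcases Finset.mem_union.mp hc with h | h
          · exact hsX h
          · exact hW.2.1 h
      have : weight w' (edgeBoundary G (X ∩ W)) ≤ weight w' (edgeBoundary G X) := by linarith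
      exact le_trans this (hX.2.2 T hxT hyT)

end GH

section GH2

variable [Fintype V] [DecidableEq V] (G : SimpleGraph V) (w' : Sym2 V → ℝ)

lemma sepz_both_in {S : Finset V} {u v : V} (hu : u ∈ S) (hv : v ∈ S) : sepz S u v = 0 := by
  unfold sepz; rw [if_pos hu, if_pos hv]; decide

lemma sepz_both_out {S : Finset V} {u v : V} (hu : u ∉ S) (hv : v ∉ S) : sepz S u v = 0 := by
  unfold sepz; rw [if_neg hu, if_neg hv]; decide

lemma sepz_in_out {S : Finset V} {u v : V} (hu : u ∈ S) (hv : v ∉ S) : sepz S u v = 1 := by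
  unfold sepz; rw [if_pos hu, if_neg hv]; decide

lemma sepz_out_in {S : Finset V} {u v : V} (hu : u ∉ S) (hv : v ∈ S) : sepz S u v = 1 := by
  unfold sepz; rw [if_neg hu, if_pos hv]; decide

lemma sepz_congr {Z X : Finset V} {u v u' v' : V}
    (h1 : u ∈ Z ↔ u' ∈ X) (h2 : v ∈ Z ↔ v' ∈ X) : sepz Z u v = sepz X u' v' := by
  unfold sepz
  rw [if_congr h1 rfl rfl, if_congr h2 rfl rfl]

lemma sepz_algebra (S : Finset V) (u v r s : V) :
    sepz S r s + (sepz S u r + sepz S s v) = sepz S u v := by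
  unfold sepz
  by_cases hu : u ∈ S <;> by_cases hv : v ∈ S <;> by_cases hr : r ∈ S <;>
    by_cases hs : s ∈ S <;> simp only [hu, hv, hr, hs, if_pos, if_neg, if_true, if_false,
      not_true, not_false_iff] <;> decide

lemma sepz_algebra' (S : Finset V) (u v r s : V) :
    sepz S r s + (sepz S r v + sepz S u s) = sepz S u v := by
  unfold sepz
  by_cases hu : u ∈ S <;> by_cases hv : v ∈ S <;> by_cases hr : r ∈ S <;>
    by_cases hs : s ∈ S <;> simp only [hu, hv, hr, hs, if_pos, if_neg, if_true, if_false,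
      not_true, not_false_iff] <;> decide

lemma mem_zuncross_in {W X : Finset V} {r a : V} (ha : a ∈ W) :
    (a ∈ (if r ∈ X then X ∪ Wᶜ else X ∩ W)) ↔ a ∈ X := by
  split_ifs with h <;>
    simp [Finset.mem_union, Finset.mem_inter, Finset.mem_compl, ha]

lemma mem_zuncross_out {W X : Finset V} {r a : V} (ha : a ∉ W) :
    (a ∈ (if r ∈ X then X ∪ Wᶜ else X ∩ W)) ↔ r ∈ X := by
  split_ifs with h <;>
    simp [Finset.mem_union, Finset.mem_inter, Finset.mem_compl, ha, h]

lemma mem_zuncross_in' {W X : Finset V} {s a : V} (ha : a ∉ W) :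
    (a ∈ (if s ∈ X then X ∪ W else X ∩ Wᶜ)) ↔ a ∈ X := by
  split_ifs with h <;>
    simp [Finset.mem_union, Finset.mem_inter, Finset.mem_compl, ha]

lemma mem_zuncross_out' {W X : Finset V} {s a : V} (ha : a ∈ W) :
    (a ∈ (if s ∈ X then X ∪ W else X ∩ Wᶜ)) ↔ s ∈ X := by
  split_ifs with h <;>
    simp [Finset.mem_union, Finset.mem_inter, Finset.mem_compl, ha, h]

set_option maxHeartbeats 1000000 in
lemma gomory_hu (hG : G.Connected)
    (hw'pos : ∀ e ∈ G.edgeSet, 0 ≤ w' e)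
    (hw'inj : ∀ A B : Finset (Sym2 V), A ≠ B → weight w' A ≠ weight w' B) :
    ∀ (n : ℕ) (R : Finset V), R.card ≤ n →
    ∃ L : List (V × V × Finset V),
      (∀ p ∈ L, p.1 ∈ R ∧ p.2.1 ∈ R ∧ p.1 ≠ p.2.1 ∧ MinSide G w' p.1 p.2.1 p.2.2) ∧
      (∀ u ∈ R, ∀ v ∈ R, ∀ S : Finset V,
        sepz S u v = (L.map (fun p => sepz S p.1 p.2.1 * sepz p.2.2 u v)).sum) := by
  intro n
  induction n with
  | zero =>
    intro R hR
    refine ⟨[], by simp, ?_⟩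
    intro u hu
    have : R = ∅ := Finset.card_eq_zero.mp (le_antisymm hR (Nat.zero_le _))
    subst this
    simp at hu
  | succ n ih =>
    intro R hR
    by_cases hsmall : R.card ≤ 1
    · refine ⟨[], by simp, ?_⟩
      intro u hu v hv S
      have huv : u = v := Finset.card_le_one.mp hsmall _ hu _ hv
      subst huv
      simp [sepz_self]
    · push_neg at hsmall
      obtain ⟨r₀, hr₀, s₀, hs₀, hrs₀⟩ := Finset.one_lt_card.mp hsmall
      set PR : Finset (V × V) := (R ×ˢ R).filter (fun p : V × V => p.1 ≠ p.2) with hPR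
      have hPRne : PR.Nonempty := by
        refine ⟨(r₀, s₀), ?_⟩
        rw [hPR]
        simp only [Finset.mem_filter, Finset.mem_product]
        exact ⟨⟨hr₀, hs₀⟩, hrs₀⟩
      obtain ⟨p₀, hp₀mem, hp₀max⟩ :=
        Finset.exists_max_image PR (fun p : V × V => lamval G w' p.1 p.2) hPRne
      rw [hPR] at hp₀mem
      simp only [Finset.mem_filter, Finset.mem_product] at hp₀mem
      obtain ⟨⟨hrR, hsR⟩, hrs⟩ := hp₀mem
      set r := p₀.1 with hrdef
      set s := p₀.2 with hsdef
      obtain ⟨W, hWms, hWval⟩ := exists_minside G w' hrs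
      have hmax : ∀ x y : V, x ∈ R → y ∈ R → x ≠ y →
          lamval G w' x y ≤ lamval G w' r s := by
        intro x y hx hy hxy
        have : (x, y) ∈ PR := by
          rw [hPR]
          simp only [Finset.mem_filter, Finset.mem_product]
          exact ⟨⟨hx, hy⟩, hxy⟩
        exact hp₀max (x, y) this
      set R₁ : Finset V := R.filter (· ∈ W) with hR₁
      set R₂ : Finset V := R.filter (· ∉ W) with hR₂
      have hrR₁ : r ∈ R₁ := by rw [hR₁]; simp only [Finset.mem_filter]; exact ⟨hrR, hWms.1⟩
      have hsR₂ : s ∈ R₂ := by rw [hR₂]; simp only [Finset.mem_filter]; exact ⟨hsR, hWms.2.1⟩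
      have hcard₁ : R₁.card ≤ n := by
        have hlt : R₁.card < R.card := by
          apply Finset.card_lt_card
          rw [Finset.ssubset_iff_of_subset (Finset.filter_subset _ _)]
          refine ⟨s, hsR, ?_⟩
          simp only [Finset.mem_filter, not_and]
          intro _
          exact hWms.2.1
        omega
      have hcard₂ : R₂.card ≤ n := by
        have hlt : R₂.card < R.card := by
          apply Finset.card_lt_card
          rw [Finset.ssubset_iff_of_subset (Finset.filter_subset _ _)]
          refine ⟨r, hrR, ?_⟩
          simp only [Finset.mem_filter, not_and, not_not]
          intro _
          exact hWms.1
        omega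
      obtain ⟨L₁, hL₁a, hL₁b⟩ := ih R₁ hcard₁
      obtain ⟨L₂, hL₂a, hL₂b⟩ := ih R₂ hcard₂
      -- facts about members of L₁
      have hfacts₁ : ∀ p ∈ L₁, p.1 ∈ W ∧ p.2.1 ∈ W ∧ p.1 ∈ R ∧ p.2.1 ∈ R ∧ p.1 ≠ p.2.1 ∧
          MinSide G w' p.1 p.2.1 p.2.2 ∧ (r ∈ p.2.2 ↔ s ∈ p.2.2) := by
        intro p hp
        obtain ⟨hx, hy, hxy, hms⟩ := hL₁a p hp
        rw [hR₁] at hx hy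
        simp only [Finset.mem_filter] at hx hy
        have hle : weight w' (edgeBoundary G p.2.2) ≤ weight w' (edgeBoundary G W) := by
          rw [minside_lamval G w' hms, hWval]
          exact hmax _ _ hx.1 hy.1 hxy
        exact ⟨hx.2, hy.2, hx.1, hy.1, hxy, hms,
          comember G w' hG hw'inj hWms hms hx.2 hy.2 hle⟩
      have hfacts₂ : ∀ p ∈ L₂, p.1 ∉ W ∧ p.2.1 ∉ W ∧ p.1 ∈ R ∧ p.2.1 ∈ R ∧ p.1 ≠ p.2.1 ∧
          MinSide G w' p.1 p.2.1 p.2.2 ∧ (s ∈ p.2.2 ↔ r ∈ p.2.2) := by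
        intro p hp
        obtain ⟨hx, hy, hxy, hms⟩ := hL₂a p hp
        rw [hR₂] at hx hy
        simp only [Finset.mem_filter] at hx hy
        have hle : weight w' (edgeBoundary G p.2.2) ≤ weight w' (edgeBoundary G Wᶜ) := by
          rw [minside_lamval G w' hms, weight_eb_compl, hWval]
          exact hmax _ _ hx.1 hy.1 hxy
        have hWc : MinSide G w' s r Wᶜ := minside_compl G w' hWms
        have hxWc : p.1 ∈ Wᶜ := Finset.mem_compl.mpr hx.2
        have hyWc : p.2.1 ∈ Wᶜ := Finset.mem_compl.mpr hy.2
        exact ⟨hx.2, hy.2, hx.1, hy.1, hxy, hms,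
          comember G w' hG hw'inj hWc hms hxWc hyWc hle⟩
      set m₁ : V × V × Finset V → V × V × Finset V :=
        fun p => (p.1, p.2.1, if r ∈ p.2.2 then p.2.2 ∪ Wᶜ else p.2.2 ∩ W) with hm₁
      set m₂ : V × V × Finset V → V × V × Finset V :=
        fun p => (p.1, p.2.1, if s ∈ p.2.2 then p.2.2 ∪ W else p.2.2 ∩ Wᶜ) with hm₂
      refine ⟨(r, s, W) :: (L₁.map m₁ ++ L₂.map m₂), ?_, ?_⟩
      · intro p hp
        rcases List.mem_cons.mp hp with rfl | hp
        · exact ⟨hrR, hsR, hrs, hWms⟩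
        rcases List.mem_append.mp hp with hp | hp
        · obtain ⟨q, hq, rfl⟩ := List.mem_map.mp hp
          obtain ⟨hxW, hyW, hxR, hyR, hxy, hms, hco⟩ := hfacts₁ q hq
          refine ⟨hxR, hyR, hxy, ?_⟩
          exact z_minside G w' hw'pos hWms hms hxW hyW hco
        · obtain ⟨q, hq, rfl⟩ := List.mem_map.mp hp
          obtain ⟨hxW, hyW, hxR, hyR, hxy, hms, hco⟩ := hfacts₂ q hq
          refine ⟨hxR, hyR, hxy, ?_⟩
          have hWc : MinSide G w' s r Wᶜ := minside_compl G w' hWms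
          have := z_minside G w' hw'pos hWc hms (Finset.mem_compl.mpr hxW)
            (Finset.mem_compl.mpr hyW) hco
          rwa [compl_compl] at this
      · intro u hu v hv S
        rw [List.map_cons, List.sum_cons, List.map_append, List.sum_append,
          List.map_map, List.map_map]
        have hmemR₁ : ∀ a, a ∈ R → a ∈ W → a ∈ R₁ := by
          intro a h1 h2; rw [hR₁]; simp only [Finset.mem_filter]; exact ⟨h1, h2⟩
        have hmemR₂ : ∀ a, a ∈ R → a ∉ W → a ∈ R₂ := by
          intro a h1 h2; rw [hR₂]; simp only [Finset.mem_filter]; exact ⟨h1, h2⟩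
        by_cases huW : u ∈ W <;> by_cases hvW : v ∈ W
        · -- both in W
          have hhead : sepz W u v = 0 := sepz_both_in huW hvW
          have hmap₁ : L₁.map ((fun p : V × V × Finset V =>
              sepz S p.1 p.2.1 * sepz p.2.2 u v) ∘ m₁) =
              L₁.map (fun p => sepz S p.1 p.2.1 * sepz p.2.2 u v) := by
            apply List.map_congr_left
            intro q hq
            obtain ⟨hxW, hyW, _, _, _, hms, hco⟩ := hfacts₁ q hq
            simp only [Function.comp, hm₁]
            congr 1
            exact sepz_congr (mem_zuncross_in huW) (mem_zuncross_in hvW)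
          have hmap₂ : ∀ x ∈ L₂.map ((fun p : V × V × Finset V =>
              sepz S p.1 p.2.1 * sepz p.2.2 u v) ∘ m₂), x = 0 := by
            intro x hx
            obtain ⟨q, hq, rfl⟩ := List.mem_map.mp hx
            obtain ⟨hxW, hyW, _, _, _, hms, hco⟩ := hfacts₂ q hq
            simp only [Function.comp, hm₂]
            have : sepz (if s ∈ q.2.2 then q.2.2 ∪ W else q.2.2 ∩ Wᶜ) u v = 0 := by
              rw [sepz_congr (X := q.2.2) (u' := s) (v' := s)
                (mem_zuncross_out' huW) (mem_zuncross_out' hvW), sepz_self]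
            rw [this, mul_zero]
          rw [hhead, mul_zero, hmap₁, List.sum_eq_zero hmap₂,
            ← hL₁b u (hmemR₁ u hu huW) v (hmemR₁ v hv hvW) S]
          ring
        · -- u in W, v not in W
          have hhead : sepz W u v = 1 := sepz_in_out huW hvW
          have hmap₁ : L₁.map ((fun p : V × V × Finset V =>
              sepz S p.1 p.2.1 * sepz p.2.2 u v) ∘ m₁) =
              L₁.map (fun p => sepz S p.1 p.2.1 * sepz p.2.2 u r) := by
            apply List.map_congr_left
            intro q hq
            obtain ⟨hxW, hyW, _, _, _, hms, hco⟩ := hfacts₁ q hq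
            simp only [Function.comp, hm₁]
            congr 1
            exact sepz_congr (mem_zuncross_in huW) (mem_zuncross_out hvW)
          have hmap₂ : L₂.map ((fun p : V × V × Finset V =>
              sepz S p.1 p.2.1 * sepz p.2.2 u v) ∘ m₂) =
              L₂.map (fun p => sepz S p.1 p.2.1 * sepz p.2.2 s v) := by
            apply List.map_congr_left
            intro q hq
            obtain ⟨hxW, hyW, _, _, _, hms, hco⟩ := hfacts₂ q hq
            simp only [Function.comp, hm₂]
            congr 1
            exact sepz_congr (mem_zuncross_out' huW) (mem_zuncross_in' hvW)
          rw [hhead, mul_one, hmap₁, hmap₂,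
            ← hL₁b u (hmemR₁ u hu huW) r hrR₁ S,
            ← hL₂b s hsR₂ v (hmemR₂ v hv hvW) S]
          exact (sepz_algebra S u v r s).symm
        · -- u not in W, v in W
          have hhead : sepz W u v = 1 := sepz_out_in huW hvW
          have hmap₁ : L₁.map ((fun p : V × V × Finset V =>
              sepz S p.1 p.2.1 * sepz p.2.2 u v) ∘ m₁) =
              L₁.map (fun p => sepz S p.1 p.2.1 * sepz p.2.2 r v) := by
            apply List.map_congr_left
            intro q hq
            obtain ⟨hxW, hyW, _, _, _, hms, hco⟩ := hfacts₁ q hq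
            simp only [Function.comp, hm₁]
            congr 1
            exact sepz_congr (mem_zuncross_out huW) (mem_zuncross_in hvW)
          have hmap₂ : L₂.map ((fun p : V × V × Finset V =>
              sepz S p.1 p.2.1 * sepz p.2.2 u v) ∘ m₂) =
              L₂.map (fun p => sepz S p.1 p.2.1 * sepz p.2.2 u s) := by
            apply List.map_congr_left
            intro q hq
            obtain ⟨hxW, hyW, _, _, _, hms, hco⟩ := hfacts₂ q hq
            simp only [Function.comp, hm₂]
            congr 1
            exact sepz_congr (mem_zuncross_in' huW) (mem_zuncross_out' hvW)
          rw [hhead, mul_one, hmap₁, hmap₂,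
            ← hL₁b r hrR₁ v (hmemR₁ v hv hvW) S,
            ← hL₂b u (hmemR₂ u hu huW) s hsR₂ S]
          exact (sepz_algebra' S u v r s).symm
        · -- both not in W
          have hhead : sepz W u v = 0 := sepz_both_out huW hvW
          have hmap₁ : ∀ x ∈ L₁.map ((fun p : V × V × Finset V =>
              sepz S p.1 p.2.1 * sepz p.2.2 u v) ∘ m₁), x = 0 := by
            intro x hx
            obtain ⟨q, hq, rfl⟩ := List.mem_map.mp hx
            obtain ⟨hxW, hyW, _, _, _, hms, hco⟩ := hfacts₁ q hq
            simp only [Function.comp, hm₁]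
            have : sepz (if r ∈ q.2.2 then q.2.2 ∪ Wᶜ else q.2.2 ∩ W) u v = 0 := by
              rw [sepz_congr (X := q.2.2) (u' := r) (v' := r)
                (mem_zuncross_out huW) (mem_zuncross_out hvW), sepz_self]
            rw [this, mul_zero]
          have hmap₂ : L₂.map ((fun p : V × V × Finset V =>
              sepz S p.1 p.2.1 * sepz p.2.2 u v) ∘ m₂) =
              L₂.map (fun p => sepz S p.1 p.2.1 * sepz p.2.2 u v) := by
            apply List.map_congr_left
            intro q hq
            obtain ⟨hxW, hyW, _, _, _, hms, hco⟩ := hfacts₂ q hq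
            simp only [Function.comp, hm₂]
            congr 1
            exact sepz_congr (mem_zuncross_in' huW) (mem_zuncross_in' hvW)
          rw [hhead, mul_zero, hmap₂, List.sum_eq_zero hmap₁,
            ← hL₂b u (hmemR₂ u hu huW) v (hmemR₂ v hv hvW) S]
          ring

end GH2

section Final

variable [Fintype V] [DecidableEq V]

lemma list_sum_mem' {M : Type*} [AddCommMonoid M] [Module (ZMod 2) M]
    (p : Submodule (ZMod 2) M) : ∀ (l : List M), (∀ x ∈ l, x ∈ p) → l.sum ∈ p := by
  intro l
  induction l with
  | nil => intro _; simp only [List.sum_nil]; exact p.zero_mem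
  | cons a t ih =>
    intro hmem
    rw [List.sum_cons]
    exact p.add_mem (hmem a List.mem_cons_self) (ih (fun x hx => hmem x (List.mem_cons_of_mem a hx)))

lemma fun_add_self (f : Sym2 V → ZMod 2) : f + f = 0 := by
  funext e
  have : ∀ a : ZMod 2, a + a = 0 := by decide
  exact this (f e)

lemma sum_smul_ind (T : Finset (Finset (Sym2 V))) (f : (Sym2 V → ZMod 2) → ZMod 2) :
    ∑ B ∈ T, f (ind B) • ind B = ∑ B ∈ T.filter (fun B => f (ind B) = 1), ind B := by
  rw [Finset.sum_filter]
  apply Finset.sum_congr rfl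
  intro B _
  rcases zmod2_cases (f (ind B)) with h0 | h1
  · rw [h0, zero_smul, if_neg (by decide)]
  · rw [h1, one_smul, if_pos rfl]

lemma span_extract {T : Finset (Finset (Sym2 V))} {x : Finset (Sym2 V)}
    (h : ind x ∈ Submodule.span (ZMod 2) ((T.image ind : Finset (Sym2 V → ZMod 2)) : Set (Sym2 V → ZMod 2))) :
    ∃ ℬ ⊆ T, x = symmDiffFamily ℬ id := by
  obtain ⟨f, -, hf⟩ := Submodule.mem_span_finset.mp h
  rw [Finset.sum_image (fun a _ b _ hab => ind_injective hab)] at hf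
  refine ⟨T.filter (fun B => f (ind B) = 1), Finset.filter_subset _ _, ?_⟩
  apply ind_injective
  rw [ind_symmDiffFamily, ← sum_smul_ind, hf]

lemma ind_mem_span_image {T : Finset (Finset (Sym2 V))} {B : Finset (Sym2 V)} (hB : B ∈ T) :
    ind B ∈ Submodule.span (ZMod 2) ((T.image ind : Finset (Sym2 V → ZMod 2)) : Set (Sym2 V → ZMod 2)) :=
  Submodule.subset_span (Finset.mem_coe.mpr (Finset.mem_image_of_mem ind hB))

lemma char2_rearrange {f g h : Sym2 V → ZMod 2} (heq : f = g + h) : g = f + h := by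
  rw [heq, add_assoc, fun_add_self, add_zero]

end Final

set_option maxHeartbeats 1000000

/-- In a finite connected simple graph with positive edge weights, a cutset `D`
that is not a minimum-weight `u,v`-cut for any pair of distinct vertices `u, v` is not
relevant. -/
theorem not_min_uv_cut_not_relevant [Fintype V] [DecidableEq V] (G : SimpleGraph V)
    (hG : G.Connected) (w : Sym2 V → ℝ) (hw : ∀ e ∈ G.edgeSet, 0 < w e)
    (D : Finset (Sym2 V)) (hD : IsCutset G D)
    (h : ¬ ∃ u v : V, u ≠ v ∧ IsMinUVCut G w u v D) :
    ¬ IsRelevant G w D := by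
  classical
  rintro ⟨𝒟, ⟨⟨hcard, hcuts, hspan, hindep⟩, hmin⟩, hD𝒟⟩
  obtain ⟨S, hSne, hSuniv, hDS⟩ := hD
  push_neg at h
  obtain ⟨w', hw'gt, hw'mono, hw'inj⟩ := exists_good_perturbation w
  have hw'pos : ∀ e ∈ G.edgeSet, 0 ≤ w' e := fun e he => le_of_lt (lt_trans (hw e he) (hw'gt e))
  obtain ⟨L, hLa, hLb⟩ := gomory_hu G w' hG hw'pos hw'inj (Fintype.card V) Finset.univ
    (le_of_eq (Finset.card_univ))
  -- span of the rest of the basis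
  set Hsp : Submodule (ZMod 2) (Sym2 V → ZMod 2) :=
    Submodule.span (ZMod 2) (((𝒟.erase D).image ind : Finset (Sym2 V → ZMod 2)) :
      Set (Sym2 V → ZMod 2)) with hHsp
  -- independence: ind D is not in the span of the others
  have hindD : ind D ∉ Hsp := by
    intro hmem
    obtain ⟨f, -, hf⟩ := Submodule.mem_span_finset.mp hmem
    rw [Finset.sum_image (fun a _ b _ hab => ind_injective hab), sum_smul_ind] at hf
    set ℬ₀ := (𝒟.erase D).filter (fun B => f (ind B) = 1) with hℬ₀
    have hsub : insert D ℬ₀ ⊆ 𝒟 := by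
      intro B hB
      rcases Finset.mem_insert.mp hB with rfl | hB
      · exact hD𝒟
      · exact Finset.mem_of_mem_erase ((Finset.filter_subset _ _) hB)
    have hDnot : D ∉ ℬ₀ := by
      intro hc
      have := (Finset.filter_subset _ _) hc
      exact (Finset.mem_erase.mp this).1 rfl
    have hzero : ∑ B ∈ insert D ℬ₀, ind B = 0 := by
      rw [Finset.sum_insert hDnot, hf, fun_add_self]
    have := hindep (insert D ℬ₀) hsub ⟨D, Finset.mem_insert_self _ _⟩
    apply this
    have h2 : ind (symmDiffFamily (insert D ℬ₀) id) = ind (∅ : Finset (Sym2 V)) := by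
      rw [ind_symmDiffFamily, hzero, (ind_eq_zero_iff _).mpr rfl]
    exact ind_injective h2
  -- the decomposition identity
  set g : V × V × Finset V → (Sym2 V → ZMod 2) :=
    fun p => fun e => sepz S p.1 p.2.1 * ind (edgeBoundary G p.2.2) e with hg
  have hident : ind D = (L.map g).sum := by
    funext e
    rw [list_sum_apply, List.map_map]
    by_cases he : e ∈ G.edgeSet
    · obtain ⟨a, b, rfl, hab⟩ : ∃ a b, e = s(a, b) ∧ G.Adj a b := by
        induction e using Sym2.inductionOn with
        | hf a b => exact ⟨a, b, rfl, (SimpleGraph.mem_edgeSet G).mp he⟩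
      rw [hDS, ind_edgeBoundary_adj G hab,
        hLb a (Finset.mem_univ a) b (Finset.mem_univ b) S]
      congr 1
      apply List.map_congr_left
      intro q _
      simp only [Function.comp, hg]
      rw [ind_edgeBoundary_adj G hab]
    · rw [hDS, ind_edgeBoundary_nonedge G he]
      symm
      apply List.sum_eq_zero
      intro z hz
      obtain ⟨q, _, rfl⟩ := List.mem_map.mp hz
      simp only [Function.comp, hg]
      rw [ind_edgeBoundary_nonedge G he, mul_zero]
  -- find a generator outside the span
  have hex : ∃ p ∈ L, g p ∉ Hsp := by
    by_contra hc
    push_neg at hc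
    apply hindD
    rw [hident]
    apply list_sum_mem'
    intro z hz
    obtain ⟨q, hq, rfl⟩ := List.mem_map.mp hz
    exact hc q hq
  obtain ⟨p, hpL, hgp⟩ := hex
  obtain ⟨-, -, hxyne, hms⟩ := hLa p hpL
  have hsep1 : sepz S p.1 p.2.1 = 1 := by
    rcases zmod2_cases (sepz S p.1 p.2.1) with h0 | h1
    · exfalso
      apply hgp
      have : g p = 0 := by
        funext e
        simp only [hg, h0, zero_mul]
        rfl
      rw [this]
      exact Hsp.zero_mem
    · exact h1
  have hgpe : g p = ind (edgeBoundary G p.2.2) := by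
    funext e
    simp only [hg, hsep1, one_mul]
  rw [hgpe] at hgp
  -- w-minimality of the side p.2.2
  have hWmin : ∀ T : Finset V, p.1 ∈ T → p.2.1 ∉ T →
      weight w (edgeBoundary G p.2.2) ≤ weight w (edgeBoundary G T) := by
    intro T hxT hyT
    by_contra hlt
    push_neg at hlt
    exact absurd (hms.2.2 T hxT hyT) (not_le.mpr (hw'mono _ _ hlt))
  -- strictness
  have hcase : (p.1 ∈ S ∧ p.2.1 ∉ S) ∨ (p.2.1 ∈ S ∧ p.1 ∉ S) := by
    unfold sepz at hsep1
    by_cases hxS : p.1 ∈ S <;> by_cases hyS : p.2.1 ∈ S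
    · rw [if_pos hxS, if_pos hyS] at hsep1; exact absurd hsep1 (by decide)
    · exact Or.inl ⟨hxS, hyS⟩
    · exact Or.inr ⟨hyS, hxS⟩
    · rw [if_neg hxS, if_neg hyS] at hsep1; exact absurd hsep1 (by decide)
  have hstrict : weight w (edgeBoundary G p.2.2) < weight w D := by
    rcases hcase with ⟨hxS, hyS⟩ | ⟨hyS, hxS⟩
    · have hnmin := h p.1 p.2.1 hxyne
      unfold IsMinUVCut at hnmin
      push_neg at hnmin
      obtain ⟨D', ⟨T, hxT, hyT, hD'T⟩, hlt⟩ := hnmin ⟨S, hxS, hyS, hDS⟩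
      calc weight w (edgeBoundary G p.2.2) ≤ weight w (edgeBoundary G T) := hWmin T hxT hyT
        _ < weight w D := hD'T ▸ hlt
    · have hnmin := h p.2.1 p.1 hxyne.symm
      unfold IsMinUVCut at hnmin
      push_neg at hnmin
      obtain ⟨D', ⟨T, hyT, hxT, hD'T⟩, hlt⟩ := hnmin ⟨S, hyS, hxS, hDS⟩
      have h1 : weight w (edgeBoundary G p.2.2) ≤ weight w (edgeBoundary G Tᶜ) :=
        hWmin Tᶜ (Finset.mem_compl.mpr hxT) (fun hc => (Finset.mem_compl.mp hc) hyT)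
      rw [weight_eb_compl] at h1
      calc weight w (edgeBoundary G p.2.2) ≤ weight w (edgeBoundary G T) := h1
        _ < weight w D := hD'T ▸ hlt
  -- the replacement cut
  set C := edgeBoundary G p.2.2 with hC
  have hCnotin : C ∉ 𝒟.erase D := fun hmem => hgp (ind_mem_span_image hmem)
  -- representation of C over 𝒟 must use D
  obtain ⟨ℬC, hℬCsub, hℬCeq⟩ := hspan p.2.2
  have hCsum : ind C = ∑ B ∈ ℬC, ind B := by
    rw [hC, hℬCeq, ind_symmDiffFamily]
  have hDℬC : D ∈ ℬC := by
    by_contra hno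
    apply hgp
    rw [hCsum]
    apply Submodule.sum_mem
    intro B hB
    have : B ∈ 𝒟.erase D :=
      Finset.mem_erase.mpr ⟨fun hc => hno (hc ▸ hB), hℬCsub hB⟩
    exact ind_mem_span_image this
  have hDrep : ind D = ind C + ∑ B ∈ ℬC.erase D, ind B := by
    apply char2_rearrange
    rw [hCsum, ← Finset.add_sum_erase _ _ hDℬC]
  set 𝒟' : Finset (Finset (Sym2 V)) := insert C (𝒟.erase D) with h𝒟'
  -- membership of all basis vectors in the span of 𝒟'
  have hmemSP' : ∀ B ∈ 𝒟, ind B ∈ Submodule.span (ZMod 2)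
      ((𝒟'.image ind : Finset (Sym2 V → ZMod 2)) : Set (Sym2 V → ZMod 2)) := by
    intro B hB
    by_cases hBD : B = D
    · rw [hBD, hDrep]
      apply Submodule.add_mem
      · exact ind_mem_span_image (Finset.mem_insert_self _ _)
      · apply Submodule.sum_mem
        intro B' hB'
        have h1 : B' ∈ 𝒟.erase D := by
          rcases Finset.mem_erase.mp hB' with ⟨hne, hmem⟩
          exact Finset.mem_erase.mpr ⟨hne, hℬCsub hmem⟩
        exact ind_mem_span_image (Finset.mem_insert_of_mem h1)
    · exact ind_mem_span_image (Finset.mem_insert_of_mem (Finset.mem_erase.mpr ⟨hBD, hB⟩))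
  -- 𝒟' is a cut basis
  have hbasis' : IsCutBasis G 𝒟' := by
    refine ⟨?_, ?_, ?_, ?_⟩
    · rw [h𝒟', Finset.card_insert_of_notMem hCnotin, Finset.card_erase_of_mem hD𝒟]
      have h1 : 1 ≤ 𝒟.card := Finset.card_pos.mpr ⟨D, hD𝒟⟩
      omega
    · intro B hB
      rcases Finset.mem_insert.mp hB with rfl | hB
      · refine ⟨p.2.2, ?_, ?_, rfl⟩
        · exact Finset.ne_empty_of_mem hms.1
        · intro hc
          exact hms.2.1 (hc ▸ Finset.mem_univ p.2.1)
      · exact hcuts B (Finset.mem_of_mem_erase hB)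
    · intro S'
      apply span_extract
      obtain ⟨ℬ, hℬsub, hℬeq⟩ := hspan S'
      rw [hℬeq, ind_symmDiffFamily]
      apply Submodule.sum_mem
      intro B hB
      exact hmemSP' B (hℬsub hB)
    · intro ℬ hℬsub hℬne hℬempty
      have hsum0 : ∑ B ∈ ℬ, ind B = 0 := by
        rw [← ind_symmDiffFamily, hℬempty, (ind_eq_zero_iff _).mpr rfl]
      by_cases hCb : C ∈ ℬ
      · apply hgp
        have h2 : (0 : Sym2 V → ZMod 2) = ind C + ∑ B ∈ ℬ.erase C, ind B := by
          rw [Finset.add_sum_erase _ ind hCb, hsum0]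
        have h1 : ind C = ∑ B ∈ ℬ.erase C, ind B := by
          have h3 := char2_rearrange h2
          rwa [zero_add] at h3
        rw [h1]
        apply Submodule.sum_mem
        intro B hB
        obtain ⟨hne, hmem⟩ := Finset.mem_erase.mp hB
        rcases Finset.mem_insert.mp (hℬsub hmem) with hBC | hB'
        · exact absurd hBC hne
        · exact ind_mem_span_image hB'
      · apply hindep ℬ ?_ hℬne hℬempty
        intro B hB
        rcases Finset.mem_insert.mp (hℬsub hB) with rfl | hB'
        · exact absurd hB hCb
        · exact Finset.mem_of_mem_erase hB'
  -- the weight contradiction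
  have hle := hmin 𝒟' hbasis'
  have hlt : ∑ B ∈ 𝒟', weight w B < ∑ B ∈ 𝒟, weight w B := by
    rw [h𝒟', Finset.sum_insert hCnotin, ← Finset.add_sum_erase _ _ hD𝒟]
    have : weight w C < weight w D := hstrict
    linarith
  linarith
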